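/- Let α > 0, σ² > 0, δ > 0, and let η > 1/(4(1+σ²)). Then every differentiable function λ_B : [0,∞) → ℝ with λ_B(0) = δ that satisfies the differential equation λ_B'(t) = λ_B(t)·(−(1+σ²)·|λ_B(t)|^{4α} + |λ_B(t)|^{2α} − η) for all t ≥ 0 converges to 0 as t → ∞. -/

import Mathlib

open Filter

/-- Under DirectSet(α) gradient flow with weight decay
`η > 1/(4(1+σ²))`, the eigenvalue dynamics in the nuisance subspace `B`,
`λ_B' = λ_B (−(1+σ²)|λ_B|^{4α} + |λ_B|^{2α} − η)` with `λ_B(0) = δ > 0`,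
converge to `0`. -/
theorem directset_nuisance_eigen_to_zero
    (α σ2 δ η : ℝ) (hα : 0 < α) (hσ : 0 < σ2) (hδ : 0 < δ)
    (hη : 1 / (4 * (1 + σ2)) < η)
    (lamB : ℝ → ℝ) (hdiff : Differentiable ℝ lamB) (h0 : lamB 0 = δ)
    (hode : ∀ t : ℝ, 0 ≤ t →
      deriv lamB t =
        lamB t * (-(1 + σ2) * |lamB t| ^ (4 * α) + |lamB t| ^ (2 * α) - η)) :
    Tendsto lamB atTop (nhds 0) := by
  set A : ℝ := 1 + σ2 with hA
  have hApos : 0 < A := by positivity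
  set c : ℝ := η - 1 / (4 * A) with hc
  have hcpos : 0 < c := sub_pos.mpr hη
  -- the reaction term is uniformly ≤ -c
  have hf : ∀ t : ℝ, (-(1 + σ2) * |lamB t| ^ (4 * α) + |lamB t| ^ (2 * α) - η) ≤ -c := by
    intro t
    set y : ℝ := |lamB t| ^ (2 * α) with hy
    have hy0 : 0 ≤ y := Real.rpow_nonneg (abs_nonneg _) _
    have h4 : |lamB t| ^ (4 * α) = y ^ 2 := by
      rw [hy, ← Real.rpow_natCast (|lamB t| ^ (2 * α)) 2,
        ← Real.rpow_mul (abs_nonneg _)]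
      norm_num
      ring_nf
    rw [h4]
    have h1 : (y - A * y ^ 2) * (4 * A) ≤ 1 := by nlinarith [sq_nonneg (2 * A * y - 1)]
    have h2 : y - A * y ^ 2 ≤ 1 / (4 * A) := by
      rw [le_div_iff₀ (by positivity)]; exact h1
    simp only [hc, ← hA]
    linarith
  -- g(t) = λ(t)² e^{2ct} is antitone on [0,∞)
  set g : ℝ → ℝ := fun t => (lamB t) ^ 2 * Real.exp (2 * c * t) with hg
  have hderiv : ∀ t : ℝ, HasDerivAt g
      (2 * lamB t ^ 1 * deriv lamB t * Real.exp (2 * c * t)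
        + (lamB t) ^ 2 * (Real.exp (2 * c * t) * (2 * c))) t := by
    intro t
    have h1 : HasDerivAt (fun t => (lamB t) ^ 2) (2 * lamB t ^ 1 * deriv lamB t) t :=
      ((hdiff t).hasDerivAt).pow 2
    have h2 : HasDerivAt (fun t => Real.exp (2 * c * t)) (Real.exp (2 * c * t) * (2 * c)) t := by
      have := ((hasDerivAt_id t).const_mul (2 * c)).exp
      simpa using this
    exact h1.mul h2
  have hanti : AntitoneOn g (Set.Ici 0) := by
    refine antitoneOn_of_deriv_nonpos (convex_Ici 0) ?_ ?_ ?_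
    · have : Continuous g := by
        apply Continuous.mul
        · exact (hdiff.continuous).pow 2
        · exact Real.continuous_exp.comp (by continuity)
      exact this.continuousOn
    · intro t _
      exact (hderiv t).differentiableAt.differentiableWithinAt
    · intro t ht
      rw [interior_Ici] at ht
      have ht0 : (0:ℝ) ≤ t := le_of_lt ht
      rw [(hderiv t).deriv, hode t ht0]
      have hE : 0 < Real.exp (2 * c * t) := Real.exp_pos _
      have hfle := hf t
      set F : ℝ := -(1 + σ2) * |lamB t| ^ (4 * α) + |lamB t| ^ (2 * α) - η with hF
      have key : 2 * lamB t ^ 1 * (lamB t * F) * Real.exp (2 * c * t)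
          + (lamB t) ^ 2 * (Real.exp (2 * c * t) * (2 * c))
          = 2 * (lamB t) ^ 2 * Real.exp (2 * c * t) * (F + c) := by ring
      rw [key]
      have h1 : 0 ≤ 2 * (lamB t) ^ 2 * Real.exp (2 * c * t) := by positivity
      have h2 : F + c ≤ 0 := by linarith
      exact mul_nonpos_of_nonneg_of_nonpos h1 h2
  -- hence λ(t)² ≤ δ² e^{-2ct}, so |λ(t)| ≤ δ e^{-ct}
  have hbound : ∀ t : ℝ, 0 ≤ t → |lamB t| ≤ δ * Real.exp (-c * t) := by
    intro t ht
    have h1 : g t ≤ g 0 := hanti (Set.self_mem_Ici) ht ht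
    have h2 : g 0 = δ ^ 2 := by simp [hg, h0]
    have hE : 0 < Real.exp (2 * c * t) := Real.exp_pos _
    have hE2 : Real.exp (-c * t) ^ 2 * Real.exp (2 * c * t) = 1 := by
      rw [← Real.exp_nat_mul, ← Real.exp_add]
      norm_num
      ring
    have h3 : (lamB t) ^ 2 * Real.exp (2 * c * t) ≤ δ ^ 2 := by
      calc (lamB t) ^ 2 * Real.exp (2 * c * t) = g t := rfl
        _ ≤ g 0 := h1
        _ = δ ^ 2 := h2
    have h4 : (lamB t) ^ 2 ≤ (δ * Real.exp (-c * t)) ^ 2 := by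
      have h5 : (δ * Real.exp (-c * t)) ^ 2 * Real.exp (2 * c * t) = δ ^ 2 := by
        rw [mul_pow, mul_assoc, hE2, mul_one]
      rw [← mul_le_mul_iff_of_pos_right hE, h5]
      exact h3
    have h5 : 0 < δ * Real.exp (-c * t) := by positivity
    nlinarith [abs_nonneg (lamB t), sq_abs (lamB t)]
  -- squeeze
  have hlim : Tendsto (fun t => δ * Real.exp (-c * t)) atTop (nhds 0) := by
    have hct : Tendsto (fun t : ℝ => c * t) atTop atTop :=
      Tendsto.const_mul_atTop hcpos tendsto_id
    have h1 : Tendsto (fun t : ℝ => -c * t) atTop atBot := by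
      simpa [neg_mul] using tendsto_neg_atBot_iff.mpr hct
    have h2 : Tendsto (fun t : ℝ => Real.exp (-c * t)) atTop (nhds 0) :=
      Real.tendsto_exp_atBot.comp h1
    simpa using h2.const_mul δ
  rw [tendsto_zero_iff_abs_tendsto_zero]
  exact squeeze_zero' (Eventually.of_forall fun t => abs_nonneg _)
    ((eventually_ge_atTop 0).mono fun t ht => hbound t ht) hlim
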